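/- Let P₁ be the set of (x,Y) ∈ ℝ^m × ℝ^{m×m} satisfying the constraints of the incomplete first-level RLT relaxation (row sums ∑_f y_{ef} = (n−1)x_e, subtour-multiplied constraints ∑_{f∈E(S)} y_{ef} ≤ (|S|−1)x_e for all e and all S ⊊ V with |S| ≥ 2, diagonal y_{ee} = x_e, nonnegativity, x in the spanning tree polytope) augmented by symmetry y_{ef} = y_{fe}. Then every such (x,Y) satisfies 0 ≤ y_{ef} ≤ x_e for all e, f with e ≠ f, but there exist graphs and feasible points (x,Y) ∈ P₁ violating x_e + x_f ≤ 1 + y_{ef}; hence the relaxation obtained by adding all inequalities x_e + x_f ≤ 1 + y_{ef} is strictly contained in P₁ for some instances. -/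

import Mathlib

open Finset

/-- Feasible set of the incomplete first-level RLT relaxation augmented with
symmetry: row sums, subtour-multiplied constraints, diagonal, nonnegativity,
symmetry, and membership of `x` in the spanning tree polytope of the graph with
edge labelling `ends`. -/
def IncompleteRLT1Sym (n m : ℕ) (ends : Fin m → Sym2 (Fin n))
    (x : Fin m → ℝ) (Y : Fin m → Fin m → ℝ) : Prop :=
  (∀ e, ∑ f, Y e f = ((n : ℝ) - 1) * x e) ∧
  (∀ e : Fin m, ∀ S : Finset (Fin n), 2 ≤ S.card → S ⊂ Finset.univ →
    ∑ f ∈ Finset.univ.filter (fun f => ∀ v ∈ ends f, v ∈ S), Y e f ≤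
      ((S.card : ℝ) - 1) * x e) ∧
  (∀ e, Y e e = x e) ∧
  (∀ e f, 0 ≤ Y e f) ∧
  (∀ e f, Y e f = Y f e) ∧
  x ∈ convexHull ℝ {y : Fin m → ℝ | ∃ T : Finset (Fin m),
    (∀ e, y e = if e ∈ T then (1 : ℝ) else 0) ∧
    (SimpleGraph.fromEdgeSet (ends '' (T : Set (Fin m)))).IsTree}

/-! ### Auxiliary material for the counterexample: the 4-cycle `C₄` -/

/-- Edge labelling of the 4-cycle on vertices `0,1,2,3`. -/
def rltEnds : Fin 4 → Sym2 (Fin 4) := ![s(0,1), s(1,2), s(2,3), s(3,0)]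

/-- The fractional point `x ≡ 3/4`. -/
noncomputable def rltX : Fin 4 → ℝ := fun _ => 3/4

/-- The matrix `Y`: `3/4` on the diagonal and on adjacent pairs of edges,
`0` on the two opposite pairs. -/
noncomputable def rltY : Fin 4 → Fin 4 → ℝ :=
  ![![3/4, 3/4, 0, 3/4], ![3/4, 3/4, 3/4, 0], ![0, 3/4, 3/4, 3/4], ![3/4, 0, 3/4, 3/4]]

/-- Indicator vectors of the four spanning trees (`C₄` minus one edge). -/
noncomputable def rltZ : Fin 4 → Fin 4 → ℝ :=
  fun i e => if e ∈ Finset.univ.erase i then (1 : ℝ) else 0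

instance rltAdjDec (s : Finset (Sym2 (Fin 4))) :
    DecidableRel (SimpleGraph.fromEdgeSet (↑s : Set (Sym2 (Fin 4)))).Adj := fun v w =>
  decidable_of_iff (s(v, w) ∈ s ∧ v ≠ w) (by rw [SimpleGraph.fromEdgeSet_adj]; simp)

instance rltSdiffDec (s : Finset (Sym2 (Fin 4))) (e : Sym2 (Fin 4)) :
    DecidableRel ((SimpleGraph.fromEdgeSet (↑s : Set (Sym2 (Fin 4)))) \
      SimpleGraph.fromEdgeSet {e}).Adj := fun v w =>
  decidable_of_iff ((SimpleGraph.fromEdgeSet (↑s : Set (Sym2 (Fin 4)))).Adj v w ∧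
      ¬(s(v, w) = e ∧ v ≠ w))
    (by simp only [SimpleGraph.sdiff_adj, SimpleGraph.fromEdgeSet_adj, Set.mem_singleton_iff])

lemma rlt_tree_of (s : Finset (Sym2 (Fin 4)))
    (h1 : (SimpleGraph.fromEdgeSet (↑s : Set (Sym2 (Fin 4)))).Preconnected)
    (h2 : ∀ v w, (SimpleGraph.fromEdgeSet (↑s : Set (Sym2 (Fin 4)))).Adj v w →
      ¬ ((SimpleGraph.fromEdgeSet (↑s : Set (Sym2 (Fin 4)))) \
          SimpleGraph.fromEdgeSet {s(v, w)}).Reachable v w) :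
    (SimpleGraph.fromEdgeSet (↑s : Set (Sym2 (Fin 4)))).IsTree := by
  constructor
  · rw [SimpleGraph.connected_iff]; exact ⟨h1, inferInstance⟩
  · rw [SimpleGraph.isAcyclic_iff_forall_adj_isBridge]
    intro v w h
    rw [SimpleGraph.isBridge_iff]
    exact h2 v w h

lemma rlt_isTree (i : Fin 4) :
    (SimpleGraph.fromEdgeSet (rltEnds '' (↑(Finset.univ.erase i) : Set (Fin 4)))).IsTree := by
  rw [← Finset.coe_image]
  fin_cases i <;> exact rlt_tree_of _ (by decide) (by decide)

lemma rltY_le : ∀ e f, rltY e f ≤ 3/4 := by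
  intro e f; fin_cases e <;> fin_cases f <;> norm_num [rltY]

lemma rlt_filter_card : ∀ S : Finset (Fin 4), 2 ≤ S.card → S ⊂ Finset.univ →
    (Finset.univ.filter (fun f => ∀ v ∈ rltEnds f, v ∈ S)).card + 1 ≤ S.card := by decide

lemma rlt_feasible : IncompleteRLT1Sym 4 4 rltEnds rltX rltY := by
  refine ⟨?_, ?_, ?_, ?_, ?_, ?_⟩
  · intro e; fin_cases e <;> simp [Fin.sum_univ_four, rltY, rltX] <;> norm_num
  · intro e S h2 hss
    have hF : (Finset.univ.filter (fun f => ∀ v ∈ rltEnds f, v ∈ S)).card + 1 ≤ S.card :=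
      rlt_filter_card S h2 hss
    have hcast : ((Finset.univ.filter (fun f => ∀ v ∈ rltEnds f, v ∈ S)).card : ℝ) + 1
        ≤ (S.card : ℝ) := by exact_mod_cast hF
    have hxe : rltX e = 3/4 := rfl
    calc ∑ f ∈ Finset.univ.filter (fun f => ∀ v ∈ rltEnds f, v ∈ S), rltY e f
        ≤ ∑ f ∈ Finset.univ.filter (fun f => ∀ v ∈ rltEnds f, v ∈ S), (3/4 : ℝ) :=
          Finset.sum_le_sum (fun f _ => rltY_le e f)
      _ = ((Finset.univ.filter (fun f => ∀ v ∈ rltEnds f, v ∈ S)).card : ℝ) * (3/4) := by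
          rw [Finset.sum_const, nsmul_eq_mul]
      _ ≤ ((S.card : ℝ) - 1) * rltX e := by rw [hxe]; nlinarith
  · intro e; fin_cases e <;> norm_num [rltY, rltX]
  · intro e f; fin_cases e <;> fin_cases f <;> norm_num [rltY]
  · intro e f; fin_cases e <;> fin_cases f <;> norm_num [rltY]
  · have hz : ∀ i : Fin 4, rltZ i ∈ {y : Fin 4 → ℝ | ∃ T : Finset (Fin 4),
        (∀ e, y e = if e ∈ T then (1 : ℝ) else 0) ∧
        (SimpleGraph.fromEdgeSet (rltEnds '' (T : Set (Fin 4)))).IsTree} := by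
      intro i
      exact ⟨Finset.univ.erase i, fun e => rfl, rlt_isTree i⟩
    have hzz : ∀ i e : Fin 4, rltZ i e = 1 - (if i = e then 1 else 0) := by
      intro i e
      simp only [rltZ, Finset.mem_erase]
      by_cases h : i = e <;> simp [h, eq_comm]
    have hx : rltX = Finset.univ.centerMass (fun _ : Fin 4 => (1 : ℝ)) rltZ := by
      funext e
      simp only [Finset.centerMass, Finset.sum_const, card_univ, Fintype.card_fin,
        nsmul_eq_mul, one_smul]
      rw [Pi.smul_apply, Finset.sum_apply]
      simp only [hzz]
      rw [Finset.sum_sub_distrib, Finset.sum_const, Finset.sum_ite_eq']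
      simp [rltX]
      norm_num
    rw [hx]
    exact Finset.centerMass_mem_convexHull _ (fun i _ => zero_le_one)
      (by simp) (fun i _ => hz i)

/-- Every point of the incomplete first-level RLT relaxation (with
symmetry) satisfies `0 ≤ y e f ≤ x e`, but there is an instance together with a
feasible point violating `x e + x f ≤ 1 + y e f`; hence adding these BQP
inequalities strictly cuts the relaxation on some instances. -/
theorem incomplete_rlt1_bounds_and_bqp_violation :
    (∀ (n m : ℕ), 3 ≤ n → ∀ ends : Fin m → Sym2 (Fin n),
      Function.Injective ends → (∀ e, ¬ (ends e).IsDiag) →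
      ∀ (x : Fin m → ℝ) (Y : Fin m → Fin m → ℝ),
        IncompleteRLT1Sym n m ends x Y →
        ∀ e f : Fin m, e ≠ f → 0 ≤ Y e f ∧ Y e f ≤ x e) ∧
    (∃ (n m : ℕ) (ends : Fin m → Sym2 (Fin n)) (x : Fin m → ℝ)
        (Y : Fin m → Fin m → ℝ) (e f : Fin m),
      3 ≤ n ∧ Function.Injective ends ∧ (∀ e, ¬ (ends e).IsDiag) ∧
      IncompleteRLT1Sym n m ends x Y ∧ 1 + Y e f < x e + x f) := by
  constructor
  · intro n m hn ends hinj hnd x Y hP e f _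
    obtain ⟨-, hsub, -, hnn, -, -⟩ := hP
    refine ⟨hnn e f, ?_⟩
    obtain ⟨⟨a, b⟩, hab⟩ := (ends f).exists_rep
    have hab' : s(a, b) = ends f := hab
    have hne : a ≠ b := by
      intro h
      exact hnd f (by rw [← hab', h]; exact Sym2.mk_isDiag_iff.mpr rfl)
    set S : Finset (Fin n) := {a, b} with hS
    have hcard : S.card = 2 := Finset.card_pair hne
    have hssub : S ⊂ Finset.univ := by
      rw [Finset.ssubset_univ_iff]
      intro h
      have := Finset.card_univ (α := Fin n)
      rw [← h, hcard, Fintype.card_fin] at this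
      omega
    have key := hsub e S (by omega) hssub
    have hfilter : Finset.univ.filter (fun g => ∀ v ∈ ends g, v ∈ S) = {f} := by
      ext g
      simp only [Finset.mem_filter, Finset.mem_univ, true_and, Finset.mem_singleton]
      constructor
      · intro hg
        obtain ⟨⟨c, d⟩, hcd⟩ := (ends g).exists_rep
        have hcd' : s(c, d) = ends g := hcd
        have hcdne : c ≠ d := by
          intro h
          exact hnd g (by rw [← hcd', h]; exact Sym2.mk_isDiag_iff.mpr rfl)
        have hc : c ∈ S := hg c (by rw [← hcd']; exact Sym2.mem_mk_left c d)
        have hd : d ∈ S := hg d (by rw [← hcd']; exact Sym2.mem_mk_right c d)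
        simp only [hS, Finset.mem_insert, Finset.mem_singleton] at hc hd
        have : ends g = ends f := by
          rw [← hab', ← hcd']
          rcases hc with rfl | rfl <;> rcases hd with rfl | rfl
          · exact absurd rfl hcdne
          · rfl
          · exact Sym2.eq_swap
          · exact absurd rfl hcdne
        exact hinj this
      · rintro rfl v hv
        rw [← hab'] at hv
        rcases Sym2.mem_iff.mp hv with rfl | rfl
        · exact Finset.mem_insert_self _ _
        · exact Finset.mem_insert_of_mem (Finset.mem_singleton_self _)
    rw [hfilter, Finset.sum_singleton, hcard] at key
    norm_num at key
    exact key
  · refine ⟨4, 4, rltEnds, rltX, rltY, 0, 2, by norm_num, by decide, by decide,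
      rlt_feasible, ?_⟩
    have h0 : rltY 0 2 = 0 := rfl
    rw [h0]; norm_num [rltX]
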